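/- For every integer $n\ge 1$ and real $p>1$, $\big(n^p-(n-1)^p\big)\sum_{k=n}^\infty \frac{1}{k^p} \ge \zeta(p)$ when $n\ge 2$, with equality when $n=1$. -/

import Mathlib

open Real MeasureTheory Set

namespace RenaudAux

/-- `Q p y = ∑_{m ≥ 1} (y/(y+m))^p`. -/
noncomputable def Q (p y : ℝ) : ℝ := ∑' m : ℕ, (y / (y + ((m : ℝ) + 1))) ^ p

lemma summable_zeta {p : ℝ} (hp : 1 < p) : Summable (fun m : ℕ => ((m : ℝ) + 1) ^ (-p)) := by
  have h := Real.summable_one_div_nat_rpow.mpr hp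
  have h2 := (summable_nat_add_iff 1).mpr h
  refine h2.congr fun m => ?_
  rw [Real.rpow_neg (by positivity), one_div]
  push_cast
  ring_nf

lemma summable_Q {p : ℝ} (hp : 1 < p) {y : ℝ} (hy : 0 ≤ y) :
    Summable (fun m : ℕ => (y / (y + ((m : ℝ) + 1))) ^ p) := by
  refine Summable.of_nonneg_of_le (fun m => by positivity) (fun m => ?_)
    (((summable_zeta hp).mul_left (y ^ p)))
  have h1 : y / (y + ((m : ℝ) + 1)) ≤ y / ((m : ℝ) + 1) :=
    div_le_div_of_nonneg_left hy (by positivity) (by linarith)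
  calc (y / (y + ((m : ℝ) + 1))) ^ p ≤ (y / ((m : ℝ) + 1)) ^ p :=
        Real.rpow_le_rpow (by positivity) h1 (by linarith)
    _ = y ^ p * ((m : ℝ) + 1) ^ (-p) := by
        rw [Real.div_rpow hy (by positivity), Real.rpow_neg (by positivity), div_eq_mul_inv]

lemma Q_nonneg (p : ℝ) {y : ℝ} (hy : 0 ≤ y) : 0 ≤ Q p y :=
  tsum_nonneg fun m => by positivity

lemma summable_S {p : ℝ} (hp : 1 < p) {x : ℝ} (hx : 1 ≤ x) :
    Summable (fun k : ℕ => (x + (k : ℝ)) ^ (-p)) := by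
  refine Summable.of_nonneg_of_le (fun k => by positivity) (fun k => ?_) (summable_zeta hp)
  exact Real.rpow_le_rpow_of_nonpos (by positivity) (by linarith) (by linarith)

lemma head_id {p : ℝ} (hp : 1 < p) {x : ℝ} (hx : 1 ≤ x) :
    x ^ p * (∑' k : ℕ, (x + (k : ℝ)) ^ (-p)) = 1 + Q p x := by
  have hx0 : (0:ℝ) < x := by linarith
  rw [← tsum_mul_left]
  have hterm : ∀ k : ℕ, x ^ p * (x + (k : ℝ)) ^ (-p) = (x / (x + (k : ℝ))) ^ p := by
    intro k
    rw [Real.div_rpow hx0.le (by positivity), Real.rpow_neg (by positivity), div_eq_mul_inv]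
  rw [tsum_congr hterm]
  have hsum : Summable (fun k : ℕ => (x / (x + (k : ℝ))) ^ p) :=
    ((summable_S hp hx).mul_left (x ^ p)).congr fun k => (hterm k)
  rw [Summable.tsum_eq_zero_add hsum]
  congr 1
  · simp [div_self (ne_of_gt hx0)]
  · unfold Q
    apply tsum_congr
    intro m
    push_cast
    ring_nf

lemma tail_id {x : ℝ} (hx : 1 ≤ x) (p : ℝ) :
    (x - 1) ^ p * (∑' k : ℕ, (x + (k : ℝ)) ^ (-p)) = Q p (x - 1) := by
  rw [← tsum_mul_left]
  apply tsum_congr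
  intro k
  have h1 : (0:ℝ) ≤ x - 1 := by linarith
  rw [Real.rpow_neg (by positivity), ← div_eq_mul_inv, ← Real.div_rpow h1 (by positivity)]
  congr 2
  ring

lemma zeta_id {p : ℝ} (hp : 1 < p) :
    (∑' k : ℕ, ((k : ℝ) + 1) ^ (-p)) = 1 + Q p 1 := by
  rw [Summable.tsum_eq_zero_add (summable_zeta hp)]
  congr 1
  · norm_num
  · unfold Q
    apply tsum_congr
    intro m
    have h2 : (0:ℝ) < 1 + ((m : ℝ) + 1) := by positivity
    rw [one_div, Real.inv_rpow h2.le, ← Real.rpow_neg h2.le]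
    congr 1
    push_cast
    ring

lemma exp_slope {u v : ℝ} (hu : 0 < u) (huv : u ≤ v) :
    v * (Real.exp u - 1) ≤ u * (Real.exp v - 1) := by
  have hv : 0 < v := lt_of_lt_of_le hu huv
  have ha : (0:ℝ) ≤ 1 - u / v := by
    have : u / v ≤ 1 := (div_le_one hv).mpr huv
    linarith
  have hb : (0:ℝ) ≤ u / v := by positivity
  have hab : (1 - u / v) + u / v = 1 := by ring
  have key := convexOn_exp.2 (Set.mem_univ (0:ℝ)) (Set.mem_univ v) ha hb hab
  have h1 : (1 - u / v) • (0:ℝ) + (u / v) • v = u := by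
    rw [smul_eq_mul, smul_eq_mul, mul_zero, zero_add, div_mul_cancel₀ u hv.ne']
  rw [h1] at key
  simp only [smul_eq_mul, Real.exp_zero, mul_one] at key
  have h2 : exp u - 1 ≤ (u / v) * (exp v - 1) := by
    have : (u/v) * (exp v - 1) = (1 - u/v) + (u/v) * exp v - 1 := by ring
    linarith [key]
  calc v * (Real.exp u - 1) ≤ v * ((u / v) * (exp v - 1)) :=
        mul_le_mul_of_nonneg_left h2 hv.le
    _ = u * (exp v - 1) := by field_simp

lemma exp_inv_sub_one_pos {s : ℝ} (hs : 0 < s) : 0 < Real.exp s - 1 := by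
  have h := Real.exp_lt_exp.mpr hs
  rw [Real.exp_zero] at h
  linarith

lemma W_piece {t a b : ℝ} (ht : 0 < t) (ha : 0 < a) (hb : 0 < b) :
    (Real.exp (t / a) - 1)⁻¹ ≤ (a / (a + b)) * (Real.exp (t / (a + b)) - 1)⁻¹ := by
  set u := t / (a + b) with hu_def
  set v := t / a with hv_def
  have hu : 0 < u := by positivity
  have hv : 0 < v := by positivity
  have huv : u ≤ v := by
    apply div_le_div_of_nonneg_left ht.le ha (by linarith)
  have hslope := exp_slope hu huv
  have heu : 0 < Real.exp u - 1 := exp_inv_sub_one_pos hu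
  have hev : 0 < Real.exp v - 1 := exp_inv_sub_one_pos hv
  have hratio : a / (a + b) = u / v := by
    rw [hu_def, hv_def]
    field_simp
  rw [hratio, inv_eq_one_div, inv_eq_one_div, div_mul_div_comm]
  rw [div_le_div_iff₀ hev (by positivity)]
  nlinarith [hslope]

lemma W_superadd {t a b : ℝ} (ht : 0 < t) (ha : 0 < a) (hb : 0 < b) :
    (Real.exp (t / a) - 1)⁻¹ + (Real.exp (t / b) - 1)⁻¹
      ≤ (Real.exp (t / (a + b)) - 1)⁻¹ := by
  have h1 := W_piece ht ha hb
  have h2 := W_piece ht hb ha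
  rw [add_comm b a] at h2
  have h3 : a / (a + b) + b / (a + b) = 1 := by
    field_simp
  calc (Real.exp (t / a) - 1)⁻¹ + (Real.exp (t / b) - 1)⁻¹
      ≤ (a / (a + b)) * (Real.exp (t / (a + b)) - 1)⁻¹
        + (b / (a + b)) * (Real.exp (t / (a + b)) - 1)⁻¹ := add_le_add h1 h2
    _ = (a / (a + b) + b / (a + b)) * (Real.exp (t / (a + b)) - 1)⁻¹ := by ring
    _ = (Real.exp (t / (a + b)) - 1)⁻¹ := by rw [h3, one_mul]

lemma gamma_rep {p : ℝ} (hp : 1 < p) {y : ℝ} (hy : 0 < y) :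
    ENNReal.ofReal (Real.Gamma p * Q p y)
      = ∫⁻ t in Ioi (0:ℝ),
          ENNReal.ofReal (t ^ (p-1) * Real.exp (-t) * (Real.exp (t/y) - 1)⁻¹) := by
  have hp0 : (0:ℝ) < p := by linarith
  set c : ℕ → ℝ := fun m => 1 + ((m : ℝ) + 1) / y with hc_def
  have hc1 : ∀ m, 1 < c m := fun m => by
    simp only [hc_def, lt_add_iff_pos_right]
    positivity
  have hc0 : ∀ m, 0 < c m := fun m => lt_trans one_pos (hc1 m)
  have step3 : ∀ t ∈ Ioi (0:ℝ),
      ENNReal.ofReal (t ^ (p-1) * Real.exp (-t) * (Real.exp (t/y) - 1)⁻¹)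
        = ∑' m : ℕ, ENNReal.ofReal (t ^ (p-1) * Real.exp (-(c m * t))) := by
    intro t ht
    rw [mem_Ioi] at ht
    have hr0 : 0 < Real.exp (-(t/y)) := Real.exp_pos _
    have hr1 : Real.exp (-(t/y)) < 1 := by
      rw [Real.exp_lt_one_iff]
      have : 0 < t / y := by positivity
      linarith
    set r := Real.exp (-(t/y)) with hr_def
    have hgeo : Summable (fun m : ℕ => r ^ (m+1)) :=
      (summable_nat_add_iff 1).mpr (summable_geometric_of_lt_one hr0.le hr1)
    have hWsum : (∑' m : ℕ, r ^ (m+1)) = (Real.exp (t/y) - 1)⁻¹ := by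
      have h1 : (fun m : ℕ => r ^ (m+1)) = fun m : ℕ => r * r ^ m := by
        funext m; rw [pow_succ, mul_comm]
      rw [h1, tsum_mul_left, tsum_geometric_of_lt_one hr0.le hr1]
      have hE : Real.exp (t/y) = r⁻¹ := by
        rw [hr_def, ← Real.exp_neg, neg_neg]
      rw [hE]
      have h2 : r⁻¹ - 1 ≠ 0 := by
        have : 1 < r⁻¹ := (one_lt_inv_iff₀).mpr ⟨hr0, hr1⟩
        linarith
      field_simp
    have hterm : ∀ m : ℕ, t ^ (p-1) * Real.exp (-t) * r ^ (m+1)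
        = t ^ (p-1) * Real.exp (-(c m * t)) := by
      intro m
      rw [hr_def, ← Real.exp_nat_mul, mul_assoc, ← Real.exp_add]
      congr 2
      push_cast
      rw [hc_def]
      field_simp
      ring
    calc ENNReal.ofReal (t ^ (p-1) * Real.exp (-t) * (Real.exp (t/y) - 1)⁻¹)
        = ENNReal.ofReal (∑' m : ℕ, t ^ (p-1) * Real.exp (-t) * r ^ (m+1)) := by
          rw [tsum_mul_left, hWsum]
      _ = ∑' m : ℕ, ENNReal.ofReal (t ^ (p-1) * Real.exp (-t) * r ^ (m+1)) := by
          refine ENNReal.ofReal_tsum_of_nonneg (fun m => by positivity) ?_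
          exact hgeo.mul_left _
      _ = ∑' m : ℕ, ENNReal.ofReal (t ^ (p-1) * Real.exp (-(c m * t))) :=
          tsum_congr fun m => by rw [hterm m]
  rw [setLIntegral_congr_fun measurableSet_Ioi step3]
  have hmeas : ∀ m : ℕ, AEMeasurable
      (fun t : ℝ => ENNReal.ofReal (t ^ (p-1) * Real.exp (-(c m * t))))
      (volume.restrict (Ioi (0:ℝ))) := by
    intro m
    apply Measurable.aemeasurable
    apply ENNReal.measurable_ofReal.comp
    fun_prop
  rw [lintegral_tsum hmeas]
  have hint : ∀ m : ℕ, IntegrableOn (fun t : ℝ => t ^ (p-1) * Real.exp (-(c m * t))) (Ioi 0) := by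
    intro m
    refine Integrable.mono (Real.GammaIntegral_convergent hp0) ?_ ?_
    · apply Measurable.aestronglyMeasurable
      fun_prop
    · rw [ae_restrict_iff' measurableSet_Ioi]
      refine Filter.Eventually.of_forall (fun t ht => ?_)
      rw [mem_Ioi] at ht
      have h1 : Real.exp (-(c m * t)) ≤ Real.exp (-t) := by
        apply Real.exp_le_exp.mpr
        have := (hc1 m).le
        nlinarith
      rw [Real.norm_eq_abs, Real.norm_eq_abs, abs_of_nonneg (by positivity),
        abs_of_nonneg (by positivity)]
      calc t ^ (p-1) * Real.exp (-(c m * t)) ≤ t ^ (p-1) * Real.exp (-t) :=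
            mul_le_mul_of_nonneg_left h1 (by positivity)
        _ = Real.exp (-t) * t ^ (p-1) := by ring
  have step5 : ∀ m : ℕ,
      (∫⁻ t in Ioi (0:ℝ), ENNReal.ofReal (t ^ (p-1) * Real.exp (-(c m * t))))
        = ENNReal.ofReal ((y / (y + ((m : ℝ) + 1))) ^ p * Real.Gamma p) := by
    intro m
    rw [← ofReal_integral_eq_lintegral_ofReal (hint m)]
    · congr 1
      rw [Real.integral_rpow_mul_exp_neg_mul_Ioi hp0 (hc0 m)]
      congr 2
      rw [hc_def]
      field_simp
    · filter_upwards [ae_restrict_mem measurableSet_Ioi] with t ht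
      rw [mem_Ioi] at ht
      positivity
  rw [tsum_congr step5]
  rw [← ENNReal.ofReal_tsum_of_nonneg (fun m => by positivity)
    ((summable_Q hp hy.le).mul_right _)]
  rw [tsum_mul_right]
  rw [mul_comm]
  unfold Q
  rfl

lemma Q_superadd {p : ℝ} (hp : 1 < p) {a b : ℝ} (ha : 0 < a) (hb : 0 < b) :
    Q p a + Q p b ≤ Q p (a + b) := by
  have hΓ : 0 < Real.Gamma p := Real.Gamma_pos_of_pos (by linarith)
  have hab : 0 < a + b := by linarith
  have hQa := Q_nonneg p ha.le
  have hQb := Q_nonneg p hb.le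
  have hQab := Q_nonneg p hab.le
  have key : ENNReal.ofReal (Real.Gamma p * (Q p a + Q p b))
      ≤ ENNReal.ofReal (Real.Gamma p * Q p (a + b)) := by
    rw [mul_add, ENNReal.ofReal_add (by positivity) (by positivity),
      gamma_rep hp ha, gamma_rep hp hb, gamma_rep hp hab,
      ← lintegral_add_left (by fun_prop)]
    apply lintegral_mono_ae
    filter_upwards [ae_restrict_mem measurableSet_Ioi] with t ht
    rw [mem_Ioi] at ht
    have hfac : (0:ℝ) ≤ t ^ (p-1) * Real.exp (-t) := by positivity
    have hea : (0:ℝ) ≤ (Real.exp (t/a) - 1)⁻¹ :=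
      (inv_pos.mpr (exp_inv_sub_one_pos (by positivity))).le
    have heb : (0:ℝ) ≤ (Real.exp (t/b) - 1)⁻¹ :=
      (inv_pos.mpr (exp_inv_sub_one_pos (by positivity))).le
    rw [← ENNReal.ofReal_add (mul_nonneg hfac hea) (mul_nonneg hfac heb)]
    apply ENNReal.ofReal_le_ofReal
    calc t ^ (p-1) * Real.exp (-t) * (Real.exp (t/a) - 1)⁻¹
          + t ^ (p-1) * Real.exp (-t) * (Real.exp (t/b) - 1)⁻¹
        = t ^ (p-1) * Real.exp (-t)
            * ((Real.exp (t/a) - 1)⁻¹ + (Real.exp (t/b) - 1)⁻¹) := by ring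
      _ ≤ t ^ (p-1) * Real.exp (-t) * (Real.exp (t/(a+b)) - 1)⁻¹ :=
          mul_le_mul_of_nonneg_left (W_superadd ht ha hb) hfac
  rw [ENNReal.ofReal_le_ofReal_iff (by positivity)] at key
  exact le_of_mul_le_mul_left key hΓ

end RenaudAux

/-- Renaud's lemma: for integer `n ≥ 2` and real `p > 1`,
`(n^p - (n-1)^p) ∑_{k ≥ n} k^{-p} ≥ ζ(p)`, with equality when `n = 1`;
here `ζ(p) = ∑_{k ≥ 1} k^{-p}`. -/
theorem renaud_lemma (p : ℝ) (hp : 1 < p) (n : ℕ) (hn : 1 ≤ n) :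
    (2 ≤ n →
      (∑' k : ℕ, ((k : ℝ) + 1) ^ (-p))
        ≤ ((n : ℝ) ^ p - ((n : ℝ) - 1) ^ p) * ∑' k : ℕ, ((n : ℝ) + k) ^ (-p))
    ∧ (n = 1 →
      ((n : ℝ) ^ p - ((n : ℝ) - 1) ^ p) * (∑' k : ℕ, ((n : ℝ) + k) ^ (-p))
        = ∑' k : ℕ, ((k : ℝ) + 1) ^ (-p)) := by
  constructor
  · intro hn2
    have hx : (1:ℝ) ≤ (n:ℝ) := by exact_mod_cast hn
    have hx2 : (2:ℝ) ≤ (n:ℝ) := by exact_mod_cast hn2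
    have hid : ((n : ℝ) ^ p - ((n : ℝ) - 1) ^ p) * (∑' k : ℕ, ((n : ℝ) + k) ^ (-p))
        = 1 + RenaudAux.Q p n - RenaudAux.Q p ((n:ℝ) - 1) := by
      rw [sub_mul, RenaudAux.head_id hp hx, RenaudAux.tail_id hx p]
    have hsup := RenaudAux.Q_superadd hp (show (0:ℝ) < 1 by norm_num)
      (show (0:ℝ) < (n:ℝ) - 1 by linarith)
    rw [show (1:ℝ) + ((n:ℝ) - 1) = (n:ℝ) by ring] at hsup
    rw [hid, RenaudAux.zeta_id hp]
    linarith
  · intro hn1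
    subst hn1
    have h0 : ((1:ℕ):ℝ) = (1:ℝ) := by norm_num
    rw [h0]
    rw [show (1:ℝ) - 1 = 0 by ring, Real.one_rpow, Real.zero_rpow (by linarith : p ≠ 0)]
    rw [sub_zero, one_mul]
    apply tsum_congr
    intro k
    rw [add_comm]
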